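/- Let G be a group, f : G → G a group automorphism, and define δ : G → G by δ(x) = f(x⁻¹)x. Then the identity δ(x)δ(y) = δ(y)δ(x δ(y)) holds for all x, y ∈ G if and only if δ(δ(y)) = 1 for all y ∈ G. -/

import Mathlib

/-- For a group automorphism `f : G → G` and
`δ(x) = f(x⁻¹)x`, the identity `δ(x)δ(y) = δ(y)δ(xδ(y))` holds for all `x, y`
iff `δ(δ(y)) = 1` for all `y`. -/
theorem stmt_9 {G : Type*} [Group G] (f : G →* G) (hf : Function.Bijective f) :
    (∀ x y : G,
        (f x⁻¹ * x) * (f y⁻¹ * y)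
          = (f y⁻¹ * y) * (f (x * (f y⁻¹ * y))⁻¹ * (x * (f y⁻¹ * y))))
      ↔ (∀ y : G, f (f y⁻¹ * y)⁻¹ * (f y⁻¹ * y) = 1) := by
  constructor
  · intro h y
    have h1 := h 1 y
    simp only [inv_one, map_one, one_mul, left_eq_mul] at h1
    exact h1
  · intro h x y
    set d := f y⁻¹ * y with hd
    have hy := h y
    rw [← hd] at hy
    have hfd : f d⁻¹ = d⁻¹ := by
      rw [map_inv] at hy ⊢
      rw [inv_mul_eq_one.mp hy]
    have : f (x * d)⁻¹ = d⁻¹ * f x⁻¹ := by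
      rw [mul_inv_rev, map_mul, hfd]
    rw [this]
    group
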